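/- arXiv:1804.03456 — 4 statements merged into one kernel-verified Lean document; each statement's English description precedes it below -/
import Mathlib

section
/- Let a, b be integers with 1 ≤ a < b and 1/2 ≤ Σ_{k=a}^{b-1} 1/(k+2) ≤ 1. Set α_k = 2^{k/2}/√(k+2) for integers k ≥ 0 and define w(t) = max_{a ≤ k < b} α_k·1_{(0,2^{-k}]}(t) for 0 < t ≤ 1. Then 1/4 ≤ ∫_0^1 w(t)² dt ≤ 1, i.e. 1/2 ≤ ‖w‖_{L²(0,1)} ≤ 1. -/
open MeasureTheory Set
open scoped ENNReal

noncomputable def myα (k : ℕ) : ℝ := (2 : ℝ) ^ ((k : ℝ) / 2) / Real.sqrt (k + 2)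

lemma myα_sq (k : ℕ) : myα k ^ 2 = 2 ^ k / ((k : ℝ) + 2) := by
  rw [myα, div_pow, Real.sq_sqrt (by positivity)]
  congr 1
  rw [pow_two, ← Real.rpow_add (by norm_num), ← add_div, ← two_mul,
    mul_div_cancel_left₀ _ (by norm_num : (2:ℝ) ≠ 0), Real.rpow_natCast]

lemma myα_nonneg (k : ℕ) : 0 ≤ myα k := by
  rw [myα]; positivity

lemma lint_ind (c : ℝ) (x y : ℝ) (hsub : Set.Ioc x y ⊆ Set.Ioc (0:ℝ) 1) :
    (∫⁻ t in Set.Ioc (0:ℝ) 1,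
      (Set.Ioc x y).indicator (fun _ => ENNReal.ofReal c) t) = ENNReal.ofReal c * ENNReal.ofReal (y - x) := by
  rw [lintegral_indicator measurableSet_Ioc, Measure.restrict_restrict measurableSet_Ioc,
    Set.inter_eq_left.mpr hsub, setLIntegral_const, Real.volume_Ioc]

lemma pow_mul_zpow (k : ℕ) : (2:ℝ)^k * (2:ℝ)^(-(k:ℤ)) = 1 := by
  rw [← zpow_natCast (2:ℝ) k, ← zpow_add₀ (by norm_num : (2:ℝ) ≠ 0)]
  simp

lemma zpow_half (k : ℕ) : (2:ℝ)^(-(k:ℤ)-1) = (2:ℝ)^(-(k:ℤ)) / 2 := by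
  rw [zpow_sub₀ (by norm_num : (2:ℝ) ≠ 0), zpow_one, div_eq_mul_inv]

lemma arith1 (k : ℕ) : (2:ℝ)^k / ((k:ℝ)+2) * ((2:ℝ)^(-(k:ℤ)) - (2:ℝ)^(-(k:ℤ)-1))
    = 1/2 * (1/((k:ℝ)+2)) := by
  have h2 : ((k:ℝ)+2) ≠ 0 := by positivity
  have := pow_mul_zpow k
  rw [zpow_half]
  field_simp
  linarith [pow_mul_zpow k]

lemma arith2 (k : ℕ) : (2:ℝ)^k / ((k:ℝ)+2) * ((2:ℝ)^(-(k:ℤ)) - 0) = 1/((k:ℝ)+2) := by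
  have h2 : ((k:ℝ)+2) ≠ 0 := by positivity
  field_simp
  linarith [pow_mul_zpow k]

lemma zpow_le_one' (k : ℕ) : (2:ℝ)^(-(k:ℤ)) ≤ 1 := by
  have : (2:ℝ)^(-(k:ℤ)) ≤ (2:ℝ)^(0:ℤ) :=
    zpow_le_zpow_right₀ (by norm_num : (1:ℝ) ≤ 2) (by omega)
  simpa using this

lemma zpow_mono' {m n : ℤ} (h : m ≤ n) : (2:ℝ)^m ≤ (2:ℝ)^n :=
  zpow_le_zpow_right₀ (by norm_num : (1:ℝ) ≤ 2) h

/-- If `1 ≤ a < b` with `1/2 ≤ ∑_{k=a}^{b-1} 1/(k+2) ≤ 1`, and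
`w(t) = max_{a ≤ k < b} α_k·1_{(0,2^{-k}]}(t)` with `α_k = 2^{k/2}/√(k+2)`, then
`1/4 ≤ ∫_0^1 w(t)² dt ≤ 1`. -/
theorem stmt3 (a b : ℕ) (ha : 1 ≤ a) (hab : a < b)
    (hsum1 : (1 : ℝ) / 2 ≤ ∑ k ∈ Finset.Ico a b, (1 : ℝ) / (k + 2))
    (hsum2 : (∑ k ∈ Finset.Ico a b, (1 : ℝ) / (k + 2)) ≤ 1) :
    ENNReal.ofReal (1 / 4) ≤
      (∫⁻ t in Set.Ioc (0 : ℝ) 1, ENNReal.ofReal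
        (((Finset.Ico a b).sup' (Finset.nonempty_Ico.mpr hab) fun k =>
          (2 : ℝ) ^ ((k : ℝ) / 2) / Real.sqrt (k + 2) *
            (Set.Ioc (0 : ℝ) ((2 : ℝ) ^ (-(k : ℤ)))).indicator (fun _ => (1 : ℝ)) t) ^ 2)) ∧
    (∫⁻ t in Set.Ioc (0 : ℝ) 1, ENNReal.ofReal
        (((Finset.Ico a b).sup' (Finset.nonempty_Ico.mpr hab) fun k =>
          (2 : ℝ) ^ ((k : ℝ) / 2) / Real.sqrt (k + 2) *
            (Set.Ioc (0 : ℝ) ((2 : ℝ) ^ (-(k : ℤ)))).indicator (fun _ => (1 : ℝ)) t) ^ 2)) ≤ 1 := by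
  have hne : (Finset.Ico a b).Nonempty := Finset.nonempty_Ico.mpr hab
  set W : ℝ → ℝ := fun t => (Finset.Ico a b).sup' (Finset.nonempty_Ico.mpr hab) fun k =>
      (2 : ℝ) ^ ((k : ℝ) / 2) / Real.sqrt (k + 2) *
        (Set.Ioc (0 : ℝ) ((2 : ℝ) ^ (-(k : ℤ)))).indicator (fun _ => (1 : ℝ)) t with hWdef
  -- W t is a sup' of terms myα k * indicator
  have hW_ge : ∀ k ∈ Finset.Ico a b, ∀ t : ℝ,
      myα k * (Set.Ioc (0:ℝ) ((2:ℝ)^(-(k:ℤ)))).indicator (fun _ => (1:ℝ)) t ≤ W t := by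
    intro k hk t
    exact Finset.le_sup' (f := fun (k : ℕ) =>
      (2 : ℝ) ^ ((k : ℝ) / 2) / Real.sqrt (k + 2) *
        (Set.Ioc (0 : ℝ) ((2 : ℝ) ^ (-(k : ℤ)))).indicator (fun _ => (1 : ℝ)) t) hk
  constructor
  · -- lower bound
    show ENNReal.ofReal (1/4) ≤ ∫⁻ t in Set.Ioc (0:ℝ) 1, ENNReal.ofReal (W t ^ 2)
    set g : ℕ → ℝ → ℝ≥0∞ := fun k t =>
      (Set.Ioc ((2:ℝ)^(-(k:ℤ)-1)) ((2:ℝ)^(-(k:ℤ)))).indicator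
        (fun _ => ENNReal.ofReal (myα k ^ 2)) t with hg
    have hpt : ∀ t : ℝ, (∑ k ∈ Finset.Ico a b, g k t) ≤ ENNReal.ofReal (W t ^ 2) := by
      intro t
      by_cases hex : ∃ k₀ ∈ Finset.Ico a b, t ∈ Set.Ioc ((2:ℝ)^(-(k₀:ℤ)-1)) ((2:ℝ)^(-(k₀:ℤ)))
      · obtain ⟨k₀, hk₀, ht⟩ := hex
        have hsum : ∑ k ∈ Finset.Ico a b, g k t = g k₀ t := by
          apply Finset.sum_eq_single_of_mem k₀ hk₀
          intro k hk hne'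
          have hnot : t ∉ Set.Ioc ((2:ℝ)^(-(k:ℤ)-1)) ((2:ℝ)^(-(k:ℤ))) := by
            rcases lt_or_gt_of_ne hne' with h | h
            · intro hmem
              have h1 : (2:ℝ)^(-(k₀:ℤ)) ≤ (2:ℝ)^(-(k:ℤ)-1) := zpow_mono' (by omega)
              exact absurd hmem.1 (not_lt.mpr (le_trans ht.2 h1))
            · intro hmem
              have h1 : (2:ℝ)^(-(k:ℤ)) ≤ (2:ℝ)^(-(k₀:ℤ)-1) := zpow_mono' (by omega)
              exact absurd hmem.2 (not_le.mpr (lt_of_le_of_lt h1 ht.1))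
          exact Set.indicator_of_notMem hnot _
        rw [hsum]
        have hpos : (0:ℝ) < (2:ℝ)^(-(k₀:ℤ)-1) := by positivity
        have htmem : t ∈ Set.Ioc (0:ℝ) ((2:ℝ)^(-(k₀:ℤ))) := ⟨lt_trans hpos ht.1, ht.2⟩
        have hWt : myα k₀ ≤ W t := by
          have h := hW_ge k₀ hk₀ t
          rwa [Set.indicator_of_mem htmem, mul_one] at h
        rw [show g k₀ t = ENNReal.ofReal (myα k₀ ^ 2) from Set.indicator_of_mem ht _]
        exact ENNReal.ofReal_le_ofReal (pow_le_pow_left₀ (myα_nonneg k₀) hWt 2)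
      · have : ∑ k ∈ Finset.Ico a b, g k t = 0 := by
          apply Finset.sum_eq_zero
          intro k hk
          exact Set.indicator_of_notMem (fun hmem => hex ⟨k, hk, hmem⟩) _
        rw [this]
        exact zero_le
    have hmeas : ∀ k ∈ Finset.Ico a b, Measurable (g k) :=
      fun k _ => Measurable.indicator measurable_const measurableSet_Ioc
    calc ENNReal.ofReal (1/4)
        ≤ ENNReal.ofReal (∑ k ∈ Finset.Ico a b, 1/2 * ((1:ℝ)/(k+2))) := by
          apply ENNReal.ofReal_le_ofReal
          rw [← Finset.mul_sum]
          linarith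
      _ = ∑ k ∈ Finset.Ico a b, ENNReal.ofReal (1/2 * ((1:ℝ)/(k+2))) := by
          apply ENNReal.ofReal_sum_of_nonneg
          intro k _; positivity
      _ = ∑ k ∈ Finset.Ico a b, ∫⁻ t in Set.Ioc (0:ℝ) 1, g k t := by
          apply Finset.sum_congr rfl
          intro k hk
          have hk1 : 1 ≤ k := le_trans ha (Finset.mem_Ico.mp hk).1
          have hsub : Set.Ioc ((2:ℝ)^(-(k:ℤ)-1)) ((2:ℝ)^(-(k:ℤ))) ⊆ Set.Ioc (0:ℝ) 1 :=
            Set.Ioc_subset_Ioc (by positivity) (zpow_le_one' k)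
          rw [lint_ind _ _ _ hsub, ← ENNReal.ofReal_mul (by positivity), myα_sq, arith1 k]
      _ = ∫⁻ t in Set.Ioc (0:ℝ) 1, ∑ k ∈ Finset.Ico a b, g k t := by
          rw [lintegral_finset_sum _ (fun k hk => (hmeas k hk))]
      _ ≤ ∫⁻ t in Set.Ioc (0:ℝ) 1, ENNReal.ofReal (W t ^ 2) :=
          lintegral_mono fun t => hpt t
  · -- upper bound
    show (∫⁻ t in Set.Ioc (0:ℝ) 1, ENNReal.ofReal (W t ^ 2)) ≤ 1
    set h : ℕ → ℝ → ℝ≥0∞ := fun k t =>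
      (Set.Ioc (0:ℝ) ((2:ℝ)^(-(k:ℤ)))).indicator (fun _ => ENNReal.ofReal (myα k ^ 2)) t with hh
    have hpt : ∀ t : ℝ, ENNReal.ofReal (W t ^ 2) ≤ ∑ k ∈ Finset.Ico a b, h k t := by
      intro t
      obtain ⟨k₀, hk₀, hEq⟩ := Finset.exists_mem_eq_sup' hne (fun k =>
        (2 : ℝ) ^ ((k : ℝ) / 2) / Real.sqrt (k + 2) *
          (Set.Ioc (0 : ℝ) ((2 : ℝ) ^ (-(k : ℤ)))).indicator (fun _ => (1 : ℝ)) t)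
      have hWt : W t = myα k₀ *
          (Set.Ioc (0:ℝ) ((2:ℝ)^(-(k₀:ℤ)))).indicator (fun _ => (1:ℝ)) t := hEq
      by_cases htm : t ∈ Set.Ioc (0:ℝ) ((2:ℝ)^(-(k₀:ℤ)))
      · rw [hWt, Set.indicator_of_mem htm, mul_one]
        rw [← show h k₀ t = ENNReal.ofReal (myα k₀ ^ 2) from Set.indicator_of_mem htm _]
        exact Finset.single_le_sum (f := fun k => h k t) (fun i _ => zero_le) hk₀
      · rw [hWt, Set.indicator_of_notMem htm, mul_zero]
        norm_num
    have hmeas : ∀ k ∈ Finset.Ico a b, Measurable (h k) :=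
      fun k _ => Measurable.indicator measurable_const measurableSet_Ioc
    calc (∫⁻ t in Set.Ioc (0:ℝ) 1, ENNReal.ofReal (W t ^ 2))
        ≤ ∫⁻ t in Set.Ioc (0:ℝ) 1, ∑ k ∈ Finset.Ico a b, h k t :=
          lintegral_mono fun t => hpt t
      _ = ∑ k ∈ Finset.Ico a b, ∫⁻ t in Set.Ioc (0:ℝ) 1, h k t := by
          rw [lintegral_finset_sum _ (fun k hk => (hmeas k hk))]
      _ = ∑ k ∈ Finset.Ico a b, ENNReal.ofReal ((1:ℝ)/(k+2)) := by
          apply Finset.sum_congr rfl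
          intro k hk
          have hsub : Set.Ioc (0:ℝ) ((2:ℝ)^(-(k:ℤ))) ⊆ Set.Ioc (0:ℝ) 1 :=
            Set.Ioc_subset_Ioc le_rfl (zpow_le_one' k)
          rw [lint_ind _ _ _ hsub, ← ENNReal.ofReal_mul (by positivity), myα_sq, arith2 k]
      _ = ENNReal.ofReal (∑ k ∈ Finset.Ico a b, (1:ℝ)/(k+2)) := by
          rw [ENNReal.ofReal_sum_of_nonneg]
          intro k _; positivity
      _ ≤ 1 := by
          rw [← ENNReal.ofReal_one]
          exact ENNReal.ofReal_le_ofReal hsum2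
end

section
/- Let a, b be integers with 1 ≤ a < b and Σ_{k=a}^{b-1} 1/(k+2) ≤ 1. Set ψ(t) = √t·√(log₂(4/t)) for 0 < t ≤ 1, α_k = 2^{k/2}/√(k+2), and w(t) = max_{a ≤ k < b} α_k·1_{(0,2^{-k}]}(t). Then ∫_0^1 w(t)/ψ(t) dt ≤ 2. -/
open MeasureTheory Set
open scoped ENNReal NNReal

private noncomputable def Fn (a b : ℕ) (hab : a < b) (t : ℝ) : ℝ≥0∞ :=
  ENNReal.ofReal
    (((Finset.Ico a b).sup' (Finset.nonempty_Ico.mpr hab) fun k =>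
      (2 : ℝ) ^ ((k : ℝ) / 2) / Real.sqrt (k + 2) *
        (Set.Ioc (0 : ℝ) ((2 : ℝ) ^ (-(k : ℤ)))).indicator (fun _ => (1 : ℝ)) t) /
      (Real.sqrt t * Real.sqrt (Real.logb 2 (4 / t))))

private lemma sqrt_pow (m : ℕ) : Real.sqrt ((2:ℝ)^m) = (2:ℝ)^((m:ℝ)/2) := by
  rw [Real.sqrt_eq_rpow, ← Real.rpow_natCast 2 m, ← Real.rpow_mul (by norm_num)]
  congr 1
  ring

private lemma al_eq (m : ℕ) :
    (2:ℝ) ^ ((m:ℝ)/2) / Real.sqrt ((m:ℝ)+2) = Real.sqrt ((2:ℝ)^m / ((m:ℝ)+2)) := by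
  rw [Real.sqrt_div (by positivity), sqrt_pow]

private lemma al_mono : Monotone (fun m : ℕ => (2:ℝ) ^ ((m:ℝ)/2) / Real.sqrt ((m:ℝ)+2)) := by
  intro k j h
  simp only [al_eq]
  apply Real.sqrt_le_sqrt
  have hmono : Monotone (fun m : ℕ => (2:ℝ)^m / ((m:ℝ)+2)) := by
    apply monotone_nat_of_le_succ
    intro m
    rw [div_le_div_iff₀ (by positivity) (by positivity)]
    push_cast
    rw [pow_succ]
    have h2 : (0:ℝ) < 2^m := by positivity
    have h3 : (0:ℝ) ≤ m := Nat.cast_nonneg m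
    nlinarith
  exact hmono h

private lemma logb_ge (j : ℕ) {t : ℝ} (ht0 : 0 < t) (ht : t ≤ (2:ℝ)^(-(j:ℤ))) :
    (j:ℝ) + 2 ≤ Real.logb 2 (4/t) := by
  rw [Real.le_logb_iff_rpow_le one_lt_two (by positivity), le_div_iff₀ ht0]
  calc (2:ℝ)^((j:ℝ)+2) * t ≤ (2:ℝ)^((j:ℝ)+2) * (2:ℝ)^(-(j:ℤ)) :=
        mul_le_mul_of_nonneg_left ht (by positivity)
    _ = 4 := by
        rw [← Real.rpow_intCast 2 (-(j:ℤ)), ← Real.rpow_add two_pos]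
        have he : ((j:ℝ)+2) + ((-(j:ℤ) : ℤ):ℝ) = 2 := by push_cast; ring
        rw [he]
        have h4 := Real.rpow_natCast (2:ℝ) 2
        norm_num at h4
        linarith

private lemma mid_bound (a b : ℕ) (hab : a < b) (j : ℕ) (haj : a ≤ j) :
    ∫⁻ t in Set.Ioc ((2:ℝ) ^ (-((j:ℤ)+1))) ((2:ℝ) ^ (-(j:ℤ))), Fn a b hab t
      ≤ ENNReal.ofReal (1/((j:ℝ)+2)) := by
  set q : ℝ := (2:ℝ) ^ (-((j:ℤ)+1)) with hq
  have hq0 : 0 < q := by positivity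
  set αj : ℝ := (2:ℝ) ^ ((j:ℝ)/2) / Real.sqrt ((j:ℝ)+2) with hαj
  set m : ℝ := Real.sqrt q * Real.sqrt ((j:ℝ)+2) with hm
  have hm0 : 0 < m := by positivity
  have hmono : ∀ t ∈ Set.Ioc q ((2:ℝ) ^ (-(j:ℤ))), Fn a b hab t ≤ ENNReal.ofReal (αj / m) := by
    intro t ht
    have ht0 : 0 < t := lt_trans hq0 ht.1
    apply ENNReal.ofReal_le_ofReal
    apply div_le_div₀ (by positivity) ?_ hm0 ?_
    · -- sup' ≤ αj
      apply Finset.sup'_le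
      intro k hk
      by_cases hkt : t ∈ Set.Ioc (0:ℝ) ((2:ℝ) ^ (-(k:ℤ)))
      · rw [Set.indicator_of_mem hkt, mul_one]
        have hkj : k ≤ j := by
          by_contra hc
          push_neg at hc
          have h2 : (2:ℝ) ^ (-(k:ℤ)) ≤ q := by
            rw [hq]
            apply zpow_le_zpow_right₀ one_le_two
            omega
          linarith [ht.1, hkt.2]
        exact al_mono hkj
      · rw [Set.indicator_of_notMem hkt, mul_zero]
        positivity
    · -- m ≤ ψ
      apply mul_le_mul (Real.sqrt_le_sqrt ht.1.le) ?_ (Real.sqrt_nonneg _) (Real.sqrt_nonneg _)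
      exact Real.sqrt_le_sqrt (logb_ge j ht0 ht.2)
  calc ∫⁻ t in Set.Ioc q ((2:ℝ) ^ (-(j:ℤ))), Fn a b hab t
      ≤ ∫⁻ _ in Set.Ioc q ((2:ℝ) ^ (-(j:ℤ))), ENNReal.ofReal (αj / m) :=
        setLIntegral_mono' measurableSet_Ioc hmono
    _ = ENNReal.ofReal (αj / m) * volume (Set.Ioc q ((2:ℝ) ^ (-(j:ℤ)))) :=
        setLIntegral_const _ _
    _ ≤ ENNReal.ofReal (1/((j:ℝ)+2)) := by
        rw [Real.volume_Ioc, ← ENNReal.ofReal_mul (by positivity)]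
        apply ENNReal.ofReal_le_ofReal
        have hd : (2:ℝ) ^ (-(j:ℤ)) - q = q := by
          have h2 : (2:ℝ) ^ (-(j:ℤ)) = 2 * q := by
            rw [hq, show (-(j:ℤ)) = 1 + (-((j:ℤ)+1)) by ring, zpow_add₀ (two_ne_zero) , zpow_one]
          rw [h2]; ring
        rw [hd]
        -- αj / m * q ≤ 1/(j+2)
        have hsq : Real.sqrt q * Real.sqrt q = q := Real.mul_self_sqrt hq0.le
        have hsj : Real.sqrt ((j:ℝ)+2) * Real.sqrt ((j:ℝ)+2) = (j:ℝ)+2 :=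
          Real.mul_self_sqrt (by positivity)
        have hpsq : (2:ℝ) ^ ((j:ℝ)/2) * Real.sqrt q ≤ 1 := by
          have hq' : q = (2:ℝ) ^ (-((j:ℝ)+1)) := by
            rw [hq, ← Real.rpow_intCast 2 (-((j:ℤ)+1))]
            norm_num
          rw [hq', Real.sqrt_eq_rpow, ← Real.rpow_mul (by norm_num),
            ← Real.rpow_add (by norm_num)]
          apply Real.rpow_le_one_of_one_le_of_nonpos one_le_two
          ring_nf
          norm_num
        rw [hαj, hm, div_div, div_mul_eq_mul_div, div_le_div_iff₀ (by positivity) (by positivity)]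
        have e1 : 1 * (Real.sqrt ((j:ℝ)+2) * (Real.sqrt q * Real.sqrt ((j:ℝ)+2)))
            = 1 * (Real.sqrt q * ((j:ℝ)+2)) := by
          linear_combination Real.sqrt q * hsj
        have e2 : (2:ℝ) ^ ((j:ℝ)/2) * q * ((j:ℝ)+2)
            = ((2:ℝ) ^ ((j:ℝ)/2) * Real.sqrt q) * (Real.sqrt q * ((j:ℝ)+2)) := by
          linear_combination (-(2:ℝ) ^ ((j:ℝ)/2) * ((j:ℝ)+2)) * hsq
        rw [e1, e2]
        exact mul_le_mul_of_nonneg_right hpsq (by positivity)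

private lemma tail_bound (a n : ℕ) (han : a ≤ n) (hab : a < n + 1) :
    ∫⁻ t in Set.Ioc (0:ℝ) ((2:ℝ) ^ (-(n:ℤ))), Fn a (n+1) hab t ≤ ENNReal.ofReal 1 := by
  set c : ℝ := (2:ℝ) ^ (-(n:ℤ)) with hc
  have hc0 : 0 < c := by positivity
  set C : ℝ := (2:ℝ) ^ ((n:ℝ)/2) / ((n:ℝ)+2) with hC
  have hC0 : 0 < C := by positivity
  have hmono : ∀ t ∈ Set.Ioc (0:ℝ) c, Fn a (n+1) hab t
      ≤ ENNReal.ofReal (C * t ^ (-(1/2) : ℝ)) := by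
    intro t ht
    have ht0 : 0 < t := ht.1
    have hrt : 0 < Real.sqrt t := Real.sqrt_pos.mpr ht0
    apply ENNReal.ofReal_le_ofReal
    have hsj : Real.sqrt ((n:ℝ)+2) * Real.sqrt ((n:ℝ)+2) = (n:ℝ)+2 :=
      Real.mul_self_sqrt (by positivity)
    calc (Finset.Ico a (n+1)).sup' (Finset.nonempty_Ico.mpr hab) (fun k =>
          (2 : ℝ) ^ ((k : ℝ) / 2) / Real.sqrt (k + 2) *
            (Set.Ioc (0 : ℝ) ((2 : ℝ) ^ (-(k : ℤ)))).indicator (fun _ => (1 : ℝ)) t) /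
          (Real.sqrt t * Real.sqrt (Real.logb 2 (4 / t)))
        ≤ ((2:ℝ) ^ ((n:ℝ)/2) / Real.sqrt ((n:ℝ)+2)) /
            (Real.sqrt t * Real.sqrt ((n:ℝ)+2)) := by
          apply div_le_div₀ (by positivity) ?_ (by positivity) ?_
          · apply Finset.sup'_le
            intro k hk
            by_cases hkt : t ∈ Set.Ioc (0:ℝ) ((2:ℝ) ^ (-(k:ℤ)))
            · rw [Set.indicator_of_mem hkt, mul_one]
              exact al_mono (show k ≤ n by have := Finset.mem_Ico.mp hk; omega)
            · rw [Set.indicator_of_notMem hkt, mul_zero]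
              positivity
          · exact mul_le_mul_of_nonneg_left
              (Real.sqrt_le_sqrt (logb_ge n ht0 ht.2)) (Real.sqrt_nonneg t)
      _ = C * t ^ (-(1/2) : ℝ) := by
          have h2 : t ^ (-(1/2) : ℝ) = (Real.sqrt t)⁻¹ := by
            rw [Real.sqrt_eq_rpow, ← Real.rpow_neg ht0.le]
          rw [h2, hC]
          rw [div_eq_iff (by positivity : (Real.sqrt t * Real.sqrt ((n:ℝ)+2)) ≠ 0)]
          field_simp
          linear_combination (-1:ℝ) * hsj
  have hint : IntegrableOn (fun t => C * t ^ (-(1/2) : ℝ)) (Set.Ioc (0:ℝ) c) := by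
    have h := intervalIntegral.intervalIntegrable_rpow'
      (a := 0) (b := c) (r := -(1/2)) (by norm_num)
    exact ((intervalIntegrable_iff_integrableOn_Ioc_of_le hc0.le).mp h).const_mul C
  have hnn : 0 ≤ᵐ[volume.restrict (Set.Ioc (0:ℝ) c)] fun t => C * t ^ (-(1/2) : ℝ) := by
    filter_upwards [ae_restrict_mem measurableSet_Ioc] with t ht
    exact mul_nonneg hC0.le (Real.rpow_nonneg ht.1.le _)
  calc ∫⁻ t in Set.Ioc (0:ℝ) c, Fn a (n+1) hab t
      ≤ ∫⁻ t in Set.Ioc (0:ℝ) c, ENNReal.ofReal (C * t ^ (-(1/2) : ℝ)) :=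
        setLIntegral_mono' measurableSet_Ioc hmono
    _ = ENNReal.ofReal (∫ t in Set.Ioc (0:ℝ) c, C * t ^ (-(1/2) : ℝ)) :=
        (MeasureTheory.ofReal_integral_eq_lintegral_ofReal hint hnn).symm
    _ ≤ ENNReal.ofReal 1 := by
        apply ENNReal.ofReal_le_ofReal
        rw [← intervalIntegral.integral_of_le hc0.le,
          intervalIntegral.integral_const_mul, integral_rpow (Or.inl (by norm_num)),
          Real.zero_rpow (by norm_num)]
        have h1 : (2:ℝ) ^ ((n:ℝ)/2) * c ^ ((-(1/2):ℝ) + 1) = 1 := by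
          rw [hc, ← Real.rpow_intCast 2 (-(n:ℤ)), ← Real.rpow_mul (by norm_num),
            ← Real.rpow_add two_pos]
          have he : (n:ℝ)/2 + ((-(n:ℤ):ℤ):ℝ) * ((-(1/2):ℝ) + 1) = 0 := by push_cast; ring
          rw [he, Real.rpow_zero]
        have hn2 : (0:ℝ) < (n:ℝ) + 2 := by positivity
        rw [hC, div_mul_eq_mul_div, div_le_one hn2, sub_zero]
        have hx : c ^ ((-(1/2):ℝ)+1) / ((-(1/2):ℝ)+1) = c ^ ((-(1/2):ℝ)+1) * 2 := by
          rw [div_eq_iff (by norm_num : ((-(1/2):ℝ)+1) ≠ 0)]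
          ring
        rw [hx]
        nlinarith [h1, hn2]

private lemma upper (a b : ℕ) (hab : a < b) :
    ∀ n, a ≤ n → ∫⁻ t in Set.Ioc ((2:ℝ) ^ (-(n:ℤ))) 1, Fn a b hab t
      ≤ ∑ j ∈ Finset.Ico a n, ENNReal.ofReal (1/((j:ℝ)+2)) := by
  refine Nat.le_induction ?_ ?_
  · -- base : n = a
    rw [Finset.Ico_self, Finset.sum_empty]
    have h0 : ∀ t ∈ Set.Ioc ((2:ℝ) ^ (-(a:ℤ))) 1, Fn a b hab t ≤ 0 := by
      intro t ht
      have hw : ((Finset.Ico a b).sup' (Finset.nonempty_Ico.mpr hab) fun k =>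
          (2 : ℝ) ^ ((k : ℝ) / 2) / Real.sqrt (k + 2) *
            (Set.Ioc (0 : ℝ) ((2 : ℝ) ^ (-(k : ℤ)))).indicator (fun _ => (1 : ℝ)) t) ≤ 0 := by
        apply Finset.sup'_le
        intro k hk
        have hk' : a ≤ k := (Finset.mem_Ico.mp hk).1
        have hnm : t ∉ Set.Ioc (0:ℝ) ((2:ℝ) ^ (-(k:ℤ))) := by
          intro hmem
          have h2 : (2:ℝ) ^ (-(k:ℤ)) ≤ (2:ℝ) ^ (-(a:ℤ)) :=
            zpow_le_zpow_right₀ one_le_two (by omega)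
          linarith [ht.1, hmem.2]
        rw [Set.indicator_of_notMem hnm, mul_zero]
      exact le_of_eq (ENNReal.ofReal_eq_zero.mpr
        (div_nonpos_iff.mpr (Or.inr ⟨hw, by positivity⟩)))
    calc ∫⁻ t in Set.Ioc ((2:ℝ) ^ (-(a:ℤ))) 1, Fn a b hab t
        ≤ ∫⁻ _ in Set.Ioc ((2:ℝ) ^ (-(a:ℤ))) 1, (0:ℝ≥0∞) :=
          setLIntegral_mono' measurableSet_Ioc h0
      _ = 0 := lintegral_zero
  · -- step
    intro n hn IH
    have hcast : (-((n+1:ℕ):ℤ)) = -((n:ℤ)+1) := by push_cast; ring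
    have h1 : (2:ℝ) ^ (-((n:ℤ)+1)) ≤ (2:ℝ) ^ (-(n:ℤ)) :=
      zpow_le_zpow_right₀ one_le_two (by omega)
    have h2 : (2:ℝ) ^ (-(n:ℤ)) ≤ 1 := by
      have := zpow_le_zpow_right₀ (a := (2:ℝ)) one_le_two (show -(n:ℤ) ≤ 0 by omega)
      simpa using this
    rw [hcast, show Set.Ioc ((2:ℝ) ^ (-((n:ℤ)+1))) 1
        = Set.Ioc ((2:ℝ) ^ (-((n:ℤ)+1))) ((2:ℝ) ^ (-(n:ℤ))) ∪ Set.Ioc ((2:ℝ) ^ (-(n:ℤ))) 1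
        from (Set.Ioc_union_Ioc_eq_Ioc h1 h2).symm]
    calc ∫⁻ t in Set.Ioc ((2:ℝ) ^ (-((n:ℤ)+1))) ((2:ℝ) ^ (-(n:ℤ)))
            ∪ Set.Ioc ((2:ℝ) ^ (-(n:ℤ))) 1, Fn a b hab t
        ≤ (∫⁻ t in Set.Ioc ((2:ℝ) ^ (-((n:ℤ)+1))) ((2:ℝ) ^ (-(n:ℤ))), Fn a b hab t)
          + ∫⁻ t in Set.Ioc ((2:ℝ) ^ (-(n:ℤ))) 1, Fn a b hab t :=
          lintegral_union_le _ _ _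
      _ ≤ ENNReal.ofReal (1/((n:ℝ)+2)) + ∑ j ∈ Finset.Ico a n, ENNReal.ofReal (1/((j:ℝ)+2)) :=
          add_le_add (mid_bound a b hab n hn) IH
      _ = ∑ j ∈ Finset.Ico a (n+1), ENNReal.ofReal (1/((j:ℝ)+2)) := by
          rw [Finset.sum_Ico_succ_top hn, add_comm]

/-- If `1 ≤ a < b` with `∑_{k=a}^{b-1} 1/(k+2) ≤ 1`, `ψ(t) = √t·√(log₂(4/t))`,
`α_k = 2^{k/2}/√(k+2)` and `w(t) = max_{a ≤ k < b} α_k·1_{(0,2^{-k}]}(t)`, then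
`∫_0^1 w(t)/ψ(t) dt ≤ 2`. -/
theorem stmt4 (a b : ℕ) (ha : 1 ≤ a) (hab : a < b)
    (hsum : (∑ k ∈ Finset.Ico a b, (1 : ℝ) / (k + 2)) ≤ 1) :
    ∫⁻ t in Set.Ioc (0 : ℝ) 1, ENNReal.ofReal
        (((Finset.Ico a b).sup' (Finset.nonempty_Ico.mpr hab) fun k =>
          (2 : ℝ) ^ ((k : ℝ) / 2) / Real.sqrt (k + 2) *
            (Set.Ioc (0 : ℝ) ((2 : ℝ) ^ (-(k : ℤ)))).indicator (fun _ => (1 : ℝ)) t) /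
          (Real.sqrt t * Real.sqrt (Real.logb 2 (4 / t)))) ≤ 2 := by
  obtain ⟨n, rfl⟩ : ∃ n, b = n + 1 := ⟨b - 1, by omega⟩
  have han : a ≤ n := by omega
  show ∫⁻ t in Set.Ioc (0:ℝ) 1, Fn a (n+1) hab t ≤ 2
  have h2 : (2:ℝ) ^ (-(n:ℤ)) ≤ 1 := by
    have := zpow_le_zpow_right₀ (a := (2:ℝ)) one_le_two (show -(n:ℤ) ≤ 0 by omega)
    simpa using this
  rw [show Set.Ioc (0:ℝ) 1
      = Set.Ioc (0:ℝ) ((2:ℝ) ^ (-(n:ℤ))) ∪ Set.Ioc ((2:ℝ) ^ (-(n:ℤ))) 1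
      from (Set.Ioc_union_Ioc_eq_Ioc (by positivity) h2).symm]
  calc ∫⁻ t in Set.Ioc (0:ℝ) ((2:ℝ) ^ (-(n:ℤ))) ∪ Set.Ioc ((2:ℝ) ^ (-(n:ℤ))) 1,
          Fn a (n+1) hab t
      ≤ (∫⁻ t in Set.Ioc (0:ℝ) ((2:ℝ) ^ (-(n:ℤ))), Fn a (n+1) hab t)
        + ∫⁻ t in Set.Ioc ((2:ℝ) ^ (-(n:ℤ))) 1, Fn a (n+1) hab t :=
        lintegral_union_le _ _ _
    _ ≤ ENNReal.ofReal 1 + ∑ j ∈ Finset.Ico a n, ENNReal.ofReal (1/((j:ℝ)+2)) :=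
        add_le_add (tail_bound a n han hab) (upper a (n+1) hab n han)
    _ ≤ ENNReal.ofReal 1 + ENNReal.ofReal 1 := by
        apply add_le_add le_rfl
        rw [← ENNReal.ofReal_sum_of_nonneg (fun j _ => by positivity)]
        apply ENNReal.ofReal_le_ofReal
        calc ∑ j ∈ Finset.Ico a n, 1/((j:ℝ)+2)
            ≤ ∑ j ∈ Finset.Ico a (n+1), 1/((j:ℝ)+2) :=
              Finset.sum_le_sum_of_subset_of_nonneg
                (Finset.Ico_subset_Ico le_rfl (Nat.le_succ n))
                (fun j _ _ => by positivity)
          _ ≤ 1 := hsum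
    _ = 2 := by
        rw [ENNReal.ofReal_one, one_add_one_eq_two]
end

section
/- Let ψ(t) = √t·√(log₂(4/t)) for 0 < t ≤ 1. For every fixed t with 0 < t ≤ 1, sup_{0 < s ≤ 1} ψ(ts)/ψ(s) = √t · √(1 + (1/2)·log₂(1/t)). -/
/-- With `ψ(t) = √t·√(log₂(4/t))` on `(0,1]`, for every fixed `0 < t ≤ 1`,
`sup_{0<s≤1} ψ(ts)/ψ(s) = √t·√(1 + (1/2)·log₂(1/t))`. -/
theorem stmt8 (t : ℝ) (ht0 : 0 < t) (ht1 : t ≤ 1) :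
    (⨆ s : Set.Ioc (0 : ℝ) 1,
        (Real.sqrt (t * (s : ℝ)) * Real.sqrt (Real.logb 2 (4 / (t * (s : ℝ))))) /
          (Real.sqrt (s : ℝ) * Real.sqrt (Real.logb 2 (4 / (s : ℝ))))) =
      Real.sqrt t * Real.sqrt (1 + (1 / 2) * Real.logb 2 (1 / t)) := by
  set c := Real.logb 2 (1 / t) with hc
  have hc0 : 0 ≤ c := by
    apply Real.logb_nonneg one_lt_two
    rw [le_div_iff₀ ht0]; linarith
  have hlog4 : Real.logb 2 (4 : ℝ) = 2 := by
    rw [show (4:ℝ) = 2 ^ 2 by norm_num, Real.logb_pow, Real.logb_self_eq_one (by norm_num)]; norm_num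
  -- key: each term = √t * √(1 + c / logb 2 (4/s))
  have key : ∀ s : ℝ, 0 < s → s ≤ 1 →
      (Real.sqrt (t * s) * Real.sqrt (Real.logb 2 (4 / (t * s)))) /
        (Real.sqrt s * Real.sqrt (Real.logb 2 (4 / s)))
        = Real.sqrt t * Real.sqrt (1 + c / Real.logb 2 (4 / s)) := by
    intro s hs0 hs1
    have hL : (2:ℝ) ≤ Real.logb 2 (4 / s) := by
      have h4 : (4:ℝ) ≤ 4 / s := by rw [le_div_iff₀ hs0]; nlinarith
      calc (2:ℝ) = Real.logb 2 4 := hlog4.symm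
        _ ≤ Real.logb 2 (4 / s) := Real.logb_le_logb_of_le one_lt_two (by norm_num) h4
    have hL0 : (0:ℝ) < Real.logb 2 (4 / s) := by linarith
    have hsplit : Real.logb 2 (4 / (t * s)) = Real.logb 2 (4 / s) + c := by
      rw [hc, show (4 / (t * s)) = (4 / s) * (1 / t) by field_simp,
        Real.logb_mul (by positivity) (by positivity)]
    rw [hsplit, Real.sqrt_mul ht0.le]
    have hs : Real.sqrt s ≠ 0 := by positivity
    have hLs : Real.sqrt (Real.logb 2 (4 / s)) ≠ 0 := by positivity
    rw [show Real.sqrt t * Real.sqrt s * Real.sqrt (Real.logb 2 (4 / s) + c) /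
          (Real.sqrt s * Real.sqrt (Real.logb 2 (4 / s)))
        = Real.sqrt t * (Real.sqrt (Real.logb 2 (4 / s) + c) /
          Real.sqrt (Real.logb 2 (4 / s))) by field_simp]
    rw [← Real.sqrt_div (by linarith)]
    congr 2
    field_simp
  have hone : (1 : ℝ) ∈ Set.Ioc (0:ℝ) 1 := ⟨one_pos, le_refl 1⟩
  have hbound : ∀ s : Set.Ioc (0:ℝ) 1,
      (Real.sqrt (t * (s : ℝ)) * Real.sqrt (Real.logb 2 (4 / (t * (s : ℝ))))) /
        (Real.sqrt (s : ℝ) * Real.sqrt (Real.logb 2 (4 / (s : ℝ))))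
      ≤ Real.sqrt t * Real.sqrt (1 + (1 / 2) * c) := by
    rintro ⟨s, hs0, hs1⟩
    rw [key s hs0 hs1]
    have hL : (2:ℝ) ≤ Real.logb 2 (4 / s) := by
      have h4 : (4:ℝ) ≤ 4 / s := by rw [le_div_iff₀ hs0]; nlinarith
      calc (2:ℝ) = Real.logb 2 4 := hlog4.symm
        _ ≤ Real.logb 2 (4 / s) := Real.logb_le_logb_of_le one_lt_two (by norm_num) h4
    have h1 : c / Real.logb 2 (4 / s) ≤ c / 2 :=
      div_le_div_of_nonneg_left hc0 two_pos hL
    apply mul_le_mul_of_nonneg_left _ (Real.sqrt_nonneg t)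
    apply Real.sqrt_le_sqrt
    linarith
  have hval : (Real.sqrt (t * (1:ℝ)) * Real.sqrt (Real.logb 2 (4 / (t * (1:ℝ))))) /
        (Real.sqrt (1:ℝ) * Real.sqrt (Real.logb 2 (4 / (1:ℝ))))
      = Real.sqrt t * Real.sqrt (1 + (1 / 2) * c) := by
    rw [key 1 one_pos le_rfl, show (4:ℝ)/1 = 4 by norm_num, hlog4,
      show c / 2 = 1/2 * c by ring]
  apply le_antisymm
  · exact ciSup_le hbound
  · rw [← hval]
    exact le_ciSup ⟨_, Set.forall_mem_range.2 hbound⟩ (⟨1, hone⟩ : Set.Ioc (0:ℝ) 1)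
end

section
/- Let n_0 = 1 < n_1 < n_2 < ⋯ be integers, ψ(t) = √t·√(log₂(4/t)) for 0 < t ≤ 1, α_k = 2^{k/2}/√(k+2), and w_m(t) = max_{n_m ≤ k < n_{m+1}} α_k·1_{(0,2^{-k}]}(t) for m ≥ 0. Then for every r ∈ ℕ and all nonnegative reals c_0, …, c_r, the function w(t) = max_{0 ≤ m ≤ r} c_m·w_m(t) satisfies sup_{0 < t ≤ 1} (ψ(t)/t)·∫_0^t w(s) ds ≤ 2·max_{0 ≤ m ≤ r} c_m. -/
noncomputable def al (k : ℕ) : ℝ := (2:ℝ) ^ ((k:ℝ)/2) / Real.sqrt ((k:ℝ) + 2)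

lemma sqrt2_pow (k : ℕ) : (2:ℝ) ^ ((k:ℝ)/2) = Real.sqrt 2 ^ k := by
  rw [Real.sqrt_eq_rpow, ← Real.rpow_natCast ((2:ℝ) ^ ((1:ℝ)/2)) k,
    ← Real.rpow_mul (by norm_num)]
  norm_num
  ring_nf

lemma al_pos (k : ℕ) : 0 < al k := by
  apply div_pos (Real.rpow_pos_of_pos (by norm_num) _)
  exact Real.sqrt_pos.mpr (by positivity)

lemma al_mono_s15 : Monotone al := by
  apply monotone_nat_of_le_succ
  intro k
  unfold al
  rw [div_le_div_iff₀ (Real.sqrt_pos.mpr (by positivity)) (Real.sqrt_pos.mpr (by positivity))]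
  have h1 : (2:ℝ) ^ (((k:ℕ)+1:ℝ)/2) = (2:ℝ) ^ ((k:ℝ)/2) * Real.sqrt 2 := by
    rw [Real.sqrt_eq_rpow, ← Real.rpow_add (by norm_num)]
    ring_nf
  push_cast
  rw [h1, mul_assoc]
  apply mul_le_mul_of_nonneg_left _ (le_of_lt (Real.rpow_pos_of_pos (by norm_num) _))
  rw [← Real.sqrt_mul (by norm_num)]
  apply Real.sqrt_le_sqrt
  ring_nf
  linarith

lemma sqrt2_lb : (1.414:ℝ) ≤ Real.sqrt 2 := by
  nlinarith [Real.sq_sqrt (by norm_num : (0:ℝ) ≤ 2), Real.sqrt_nonneg 2]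

lemma sqrt2_ub : Real.sqrt 2 ≤ 1.415 := by
  nlinarith [Real.sq_sqrt (by norm_num : (0:ℝ) ≤ 2), Real.sqrt_nonneg 2]

lemma core_num (ρ y : ℝ) (hρ0 : 0 ≤ ρ) (hρ : ρ^2 ≤ 3/2) (hy1 : 1 ≤ y) (hy2 : y^2 ≤ 2) :
    Real.sqrt 2 * ρ * (y^2 - 1) / 2 + (1 + Real.sqrt 2/2) ≤ 2*y := by
  set s := Real.sqrt 2 with hs
  have h1 : (1.414:ℝ) ≤ s := sqrt2_lb
  have h2 : s ≤ 1.415 := sqrt2_ub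
  have hρ1 : ρ ≤ 1.23 := by nlinarith
  have hsρ : s * ρ ≤ 1.75 := by nlinarith
  have hss : s^2 = 2 := Real.sq_sqrt (by norm_num)
  have hy3 : y ≤ s := by nlinarith
  have hyy : 0 ≤ y^2 - 1 := by nlinarith
  have key1 : s * ρ * (y^2-1) ≤ 1.75 * (y^2-1) := mul_le_mul_of_nonneg_right hsρ hyy
  have key2 : (0:ℝ) ≤ (y - 1) * (s - y) := mul_nonneg (by linarith) (by linarith)
  nlinarith [key1, key2]

set_option maxHeartbeats 2000000 in
lemma key (j M : ℕ) (t : ℝ) (hM : j+1 ≤ M) (h1 : (2:ℝ)^(-(j:ℤ)-1) < t) (h2 : t ≤ (2:ℝ)^(-(j:ℤ))) :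
    (Real.sqrt t * Real.sqrt (Real.logb 2 (4/t))) / t *
      (al j * (t - (2:ℝ)^(-(j:ℤ)-1))
        + ((∑ i ∈ Finset.Ico (j+1) M, al i * (2:ℝ)^(-(i:ℤ)-1))
          + al M * (2:ℝ)^(-(M:ℤ)))) ≤ 2 := by
  have h2pos : ∀ z : ℤ, (0:ℝ) < (2:ℝ)^z := fun z => zpow_pos (by norm_num) z
  have ht0 : 0 < t := lt_trans (h2pos _) h1
  set s := Real.sqrt 2 with hsdef
  clear_value s
  have hss : s^2 = 2 := by rw [hsdef]; exact Real.sq_sqrt (by norm_num)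
  have hs1 : (1.414:ℝ) ≤ s := by rw [hsdef]; exact sqrt2_lb
  have hs2 : s ≤ 1.415 := by rw [hsdef]; exact sqrt2_ub
  have hs0 : 0 < s := by linarith
  set p := s ^ j with hpdef
  clear_value p
  have hp0 : 0 < p := by rw [hpdef]; exact pow_pos hs0 j
  have hp1 : 1 ≤ p := by rw [hpdef]; exact one_le_pow₀ (by linarith : 1 ≤ s)
  have hp2 : (2:ℝ)^(j:ℕ) = p^2 := by
    rw [hpdef, ← pow_mul, mul_comm, pow_mul, hss]
  set q := s/2 with hqdef
  clear_value q
  have hq0 : 0 < q := by rw [hqdef]; positivity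
  have hq1 : q < 1 := by rw [hqdef]; linarith
  have hqs : q * s = 1 := by rw [hqdef]; nlinarith
  -- zpow conversions
  have e1 : (2:ℝ)^(-(j:ℤ)) = (p^2)⁻¹ := by
    rw [zpow_neg, zpow_natCast, hp2]
  have e2 : (2:ℝ)^(-(j:ℤ)-1) = (2*p^2)⁻¹ := by
    have : (-(j:ℤ)-1) = -((j+1 : ℕ) : ℤ) := by push_cast; ring
    rw [this, zpow_neg, zpow_natCast, pow_succ, hp2]; ring_nf
  -- alpha formulas
  set A := Real.sqrt ((j:ℝ)+2) with hAdef
  clear_value A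
  set B := Real.sqrt ((j:ℝ)+3) with hBdef
  clear_value B
  have hA0 : 0 < A := by rw [hAdef]; exact Real.sqrt_pos.mpr (by positivity)
  have hB0 : 0 < B := by rw [hBdef]; exact Real.sqrt_pos.mpr (by positivity)
  have hA2 : A^2 = (j:ℝ)+2 := by rw [hAdef]; exact Real.sq_sqrt (by positivity)
  have hB2 : B^2 = (j:ℝ)+3 := by rw [hBdef]; exact Real.sq_sqrt (by positivity)
  have e3 : al j = p / A := by rw [al, sqrt2_pow, ← hsdef, ← hpdef, hAdef]
  have hqp : q ^ j = p / p^2 := by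
    rw [hqdef, div_pow, hpdef, ← hpdef, hp2]
  have hqj : q^(j+1) = 1/(s*p) := by
    rw [pow_succ, hqp]
    field_simp
    nlinarith
  -- sum bound
  have hY0 : (0:ℝ) ≤ q^M := (pow_pos hq0 M).le
  have hX0 : (0:ℝ) ≤ q^(j+1) := (pow_pos hq0 (j+1)).le
  have hXY : q^M ≤ q^(j+1) := pow_le_pow_of_le_one hq0.le hq1.le hM
  have hsum : (∑ i ∈ Finset.Ico (j+1) M, al i * (2:ℝ)^(-(i:ℤ)-1))
      + al M * (2:ℝ)^(-(M:ℤ)) ≤ (1+s/2) * q^(j+1) / B := by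
    have e4 : ∀ i : ℕ, al i * (2:ℝ)^(-(i:ℤ)-1) = q^i / 2 / Real.sqrt ((i:ℝ)+2) := by
      intro i
      have hpi2 : (2:ℝ)^(i:ℕ) = (s^i)^2 := by rw [← pow_mul, mul_comm, pow_mul, hss]
      have ei2 : (2:ℝ)^(-(i:ℤ)-1) = (2*(s^i)^2)⁻¹ := by
        have h : (-(i:ℤ)-1) = -((i+1 : ℕ) : ℤ) := by push_cast; ring
        rw [h, zpow_neg, zpow_natCast, pow_succ, hpi2]; ring_nf
      have hqi : q^i = (s^i)⁻¹ :=
        eq_inv_of_mul_eq_one_left (by rw [← mul_pow, hqs, one_pow])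
      rw [al, sqrt2_pow, ← hsdef, ei2, hqi]
      have hsi : (0:ℝ) < s^i := pow_pos hs0 i
      have hsq : (0:ℝ) < Real.sqrt ((i:ℝ)+2) := Real.sqrt_pos.mpr (by positivity)
      field_simp
    have e5 : al M * (2:ℝ)^(-(M:ℤ)) = q^M / Real.sqrt ((M:ℝ)+2) := by
      have hpM2 : (2:ℝ)^(M:ℕ) = (s^M)^2 := by rw [← pow_mul, mul_comm, pow_mul, hss]
      have hqM : q^M = (s^M)⁻¹ :=
        eq_inv_of_mul_eq_one_left (by rw [← mul_pow, hqs, one_pow])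
      rw [al, sqrt2_pow, ← hsdef, zpow_neg, zpow_natCast, hpM2, hqM]
      have hsM : (0:ℝ) < s^M := pow_pos hs0 M
      have hsq : (0:ℝ) < Real.sqrt ((M:ℝ)+2) := Real.sqrt_pos.mpr (by positivity)
      field_simp
    have step1 : (∑ i ∈ Finset.Ico (j+1) M, al i * (2:ℝ)^(-(i:ℤ)-1))
        + al M * (2:ℝ)^(-(M:ℤ)) ≤ (∑ i ∈ Finset.Ico (j+1) M, q^i/2/B) + q^M/B := by
      apply add_le_add
      · apply Finset.sum_le_sum
        intro i hi
        rw [e4 i]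
        apply div_le_div_of_nonneg_left (by positivity) hB0
        rw [hBdef]
        apply Real.sqrt_le_sqrt
        have h := (Finset.mem_Ico.mp hi).1
        have h' : (j:ℝ) + 1 ≤ (i:ℝ) := by exact_mod_cast h
        linarith
      · rw [e5]
        apply div_le_div_of_nonneg_left hY0 hB0
        rw [hBdef]
        apply Real.sqrt_le_sqrt
        have h' : (j:ℝ) + 1 ≤ (M:ℝ) := by exact_mod_cast hM
        linarith
    refine step1.trans ?_
    have hgeom : (∑ i ∈ Finset.Ico (j+1) M, q^i) = (q^M - q^(j+1))/(q-1) :=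
      geom_sum_Ico (by intro h; rw [h] at hq1; exact lt_irrefl 1 hq1) hM
    have hsum2 : (∑ i ∈ Finset.Ico (j+1) M, q^i/2/B) = ((q^M - q^(j+1))/(q-1))/2/B := by
      rw [← hgeom, ← Finset.sum_div, ← Finset.sum_div]
    rw [hsum2, ← add_div]
    gcongr
    have hys : (0:ℝ) ≤ q^M * (s-1) := mul_nonneg hY0 (by linarith)
    have hxs0 : q^(j+1) * (s^2 - 2) = 0 := by rw [hss]; ring
    have hq2 : (q-1)*2 < 0 := by linarith
    rw [div_div, div_add' _ _ _ (ne_of_lt hq2), div_le_iff_of_neg hq2]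
    have hLHS : (1+s/2)*q^(j+1)*((q-1)*2) = -q^(j+1) := by
      rw [hqdef]; linear_combination ((s/2)^(j+1)/2) * hss
    have hR : q^M*((q-1)*2) = q^M*s - 2*q^M := by rw [hqdef]; ring
    have hys : q^M ≤ q^M * s := le_mul_of_one_le_right hY0 (by linarith)
    linarith [hLHS, hR, hys]
  -- assembly
  have ht2 : t ≤ (p^2)⁻¹ := by rw [← e1]; exact h2
  have ht1 : (2*p^2)⁻¹ < t := by rw [← e2]; exact h1
  set u := Real.sqrt t with hudef
  clear_value u
  have hu0 : 0 < u := by rw [hudef]; exact Real.sqrt_pos.mpr ht0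
  have hu2 : u^2 = t := by rw [hudef]; exact Real.sq_sqrt ht0.le
  set y := s * p * u with hydef
  clear_value y
  have hy0 : 0 < y := by rw [hydef]; exact mul_pos (mul_pos hs0 hp0) hu0
  have hyy : y^2 = 2*(p^2*t) := by rw [hydef, ← hu2]; linear_combination (p^2*u^2)*hss
  have hpinv : p^2*(p^2)⁻¹ = 1 := mul_inv_cancel₀ (pow_ne_zero 2 hp0.ne')
  have hpinv2 : (2*p^2)*(2*p^2)⁻¹ = 1 := mul_inv_cancel₀ (mul_ne_zero two_ne_zero (pow_ne_zero 2 hp0.ne'))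
  have hy2 : y^2 ≤ 2 := by
    have h := mul_le_mul_of_nonneg_left ht2 (by positivity : (0:ℝ) ≤ p^2)
    rw [hpinv] at h
    linarith [hyy, h]
  have hy1 : 1 ≤ y := by
    have h := mul_le_mul_of_nonneg_left ht1.le (by positivity : (0:ℝ) ≤ 2*p^2)
    rw [hpinv2] at h
    have h1y : 1 ≤ y^2 := by linarith [hyy, h]
    exact (one_le_pow_iff_of_nonneg hy0.le (by norm_num : 2 ≠ 0)).mp h1y
  have hρ0 : (0:ℝ) ≤ B/A := (div_pos hB0 hA0).le
  have hρ2 : (B/A)^2 ≤ 3/2 := by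
    rw [div_pow, hA2, hB2, div_le_iff₀ (by positivity : (0:ℝ) < (j:ℝ)+2)]
    have : (0:ℝ) ≤ (j:ℝ) := Nat.cast_nonneg j
    linarith
  have hcore := core_num (B/A) y hρ0 hρ2 hy1 hy2
  rw [← hsdef] at hcore
  -- logb bound
  have hL : Real.logb 2 (4/t) ≤ (j:ℝ)+3 := by
    rw [Real.logb_le_iff_le_rpow one_lt_two (by positivity)]
    have hzr : ((2:ℝ)^(-(j:ℤ)-1)) = (2:ℝ)^((-(j:ℝ))-1) := by
      rw [← Real.rpow_intCast]
      push_cast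
      ring_nf
    have hpow : (2:ℝ)^((j:ℝ)+3) * (2:ℝ)^(-(j:ℤ)-1) = 4 := by
      rw [hzr, ← Real.rpow_add (by norm_num)]
      norm_num
      rw [show ((j:ℝ)+3) + (-(j:ℝ)-1) = 2 by ring]
      rw [show (2:ℝ)^(2:ℝ) = (2:ℝ)^(2:ℕ) from by rw [← Real.rpow_natCast]; norm_num]
      norm_num
    rw [div_le_iff₀ ht0]
    calc (4:ℝ) = (2:ℝ)^((j:ℝ)+3) * (2:ℝ)^(-(j:ℤ)-1) := hpow.symm
      _ ≤ (2:ℝ)^((j:ℝ)+3) * t :=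
          mul_le_mul_of_nonneg_left h1.le (Real.rpow_pos_of_pos two_pos _).le
  have hsqL : Real.sqrt (Real.logb 2 (4/t)) ≤ B := by
    rw [hBdef]; exact Real.sqrt_le_sqrt hL
  have hsqL0 : 0 ≤ Real.sqrt (Real.logb 2 (4/t)) := Real.sqrt_nonneg _
  have hpsi : u * Real.sqrt (Real.logb 2 (4/t)) / t ≤ B/u := by
    have hut : u / t = 1 / u := by
      rw [← hu2, pow_two, mul_comm]
      rw [div_mul_eq_div_mul_one_div, div_self hu0.ne']
      ring
    have hrw : u * Real.sqrt (Real.logb 2 (4/t)) / t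
        = Real.sqrt (Real.logb 2 (4/t)) * (u/t) := by ring
    rw [hrw, hut, mul_one_div]
    exact div_le_div_of_nonneg_right hsqL hu0.le

  -- positivity of P and bound P ≤ Q
  have hal0 : ∀ k, 0 ≤ al k := fun k => (al_pos k).le
  have hP0 : 0 ≤ al j * (t - (2:ℝ)^(-(j:ℤ)-1))
      + ((∑ i ∈ Finset.Ico (j+1) M, al i * (2:ℝ)^(-(i:ℤ)-1)) + al M * (2:ℝ)^(-(M:ℤ))) := by
    have h1' : 0 ≤ al j * (t - (2:ℝ)^(-(j:ℤ)-1)) :=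
      mul_nonneg (hal0 j) (by linarith)
    have h2' : 0 ≤ ∑ i ∈ Finset.Ico (j+1) M, al i * (2:ℝ)^(-(i:ℤ)-1) :=
      Finset.sum_nonneg fun i _ => mul_nonneg (hal0 i) (h2pos _).le
    have h3' : 0 ≤ al M * (2:ℝ)^(-(M:ℤ)) := mul_nonneg (hal0 M) (h2pos _).le
    linarith
  have hPQ : al j * (t - (2:ℝ)^(-(j:ℤ)-1))
      + ((∑ i ∈ Finset.Ico (j+1) M, al i * (2:ℝ)^(-(i:ℤ)-1)) + al M * (2:ℝ)^(-(M:ℤ)))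
      ≤ al j * (t - (2:ℝ)^(-(j:ℤ)-1)) + (1+s/2) * q^(j+1) / B :=
    add_le_add_right hsum _
  calc u * Real.sqrt (Real.logb 2 (4/t)) / t *
        (al j * (t - (2:ℝ)^(-(j:ℤ)-1))
          + ((∑ i ∈ Finset.Ico (j+1) M, al i * (2:ℝ)^(-(i:ℤ)-1)) + al M * (2:ℝ)^(-(M:ℤ))))
      ≤ (B/u) * (al j * (t - (2:ℝ)^(-(j:ℤ)-1)) + (1+s/2) * q^(j+1) / B) :=
        mul_le_mul hpsi hPQ hP0 (div_pos hB0 hu0).le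
    _ ≤ 2 := by
        rw [e3, e2, hqj, ← hu2]
        have heq : B/u * (p/A * (u^2 - (2*p^2)⁻¹) + (1+s/2) * (1/(s*p)) / B)
            = (s*(B/A)*(y^2-1)/2 + (1 + s/2)) / y := by
          rw [hydef]
          field_simp
          linear_combination (-B*u^2*p^2*s) * hss
        rw [heq]
        rw [div_le_iff₀ hy0]
        linarith [hcore]

noncomputable def Eset (M i : ℕ) : Set ℝ :=
  if i = M then Set.Ioc 0 ((2:ℝ)^(-(M:ℤ))) else Set.Ioc ((2:ℝ)^(-(i:ℤ)-1)) ((2:ℝ)^(-(i:ℤ)))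

lemma Eset_meas (M i : ℕ) : MeasurableSet (Eset M i) := by
  unfold Eset; split <;> exact measurableSet_Ioc

noncomputable def ell (j M : ℕ) (t : ℝ) (i : ℕ) : ℝ :=
  if i = M then (2:ℝ)^(-(M:ℤ)) else if i = j then t - (2:ℝ)^(-(j:ℤ)-1) else (2:ℝ)^(-(i:ℤ)-1)

lemma half_zpow (i : ℕ) : (2:ℝ)^(-(i:ℤ)) - (2:ℝ)^(-(i:ℤ)-1) = (2:ℝ)^(-(i:ℤ)-1) := by
  have h : (2:ℝ)^(-(i:ℤ)-1) = (2:ℝ)^(-(i:ℤ)) / 2 := by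
    rw [zpow_sub₀ (two_ne_zero), zpow_one]
  rw [h]; ring

lemma vol_bound (j M : ℕ) (t : ℝ) (hjM : j < M) (ht : (2:ℝ)^(-(j:ℤ)-1) < t)
    (i : ℕ) :
    MeasureTheory.volume (Eset M i ∩ Set.Ioc 0 t) ≤ ENNReal.ofReal (ell j M t i) := by
  rcases eq_or_ne i M with rfl | hiM
  · rw [ell, if_pos rfl, Eset, if_pos rfl]
    calc MeasureTheory.volume (Set.Ioc 0 ((2:ℝ)^(-(i:ℤ))) ∩ Set.Ioc 0 t)
        ≤ MeasureTheory.volume (Set.Ioc 0 ((2:ℝ)^(-(i:ℤ)))) :=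
          MeasureTheory.measure_mono Set.inter_subset_left
      _ = ENNReal.ofReal ((2:ℝ)^(-(i:ℤ)) - 0) := Real.volume_Ioc
      _ = ENNReal.ofReal ((2:ℝ)^(-(i:ℤ))) := by rw [sub_zero]
  rcases eq_or_ne i j with rfl | hij
  · rw [ell, if_neg hiM, if_pos rfl, Eset, if_neg hiM]
    calc MeasureTheory.volume (Set.Ioc ((2:ℝ)^(-(i:ℤ)-1)) ((2:ℝ)^(-(i:ℤ))) ∩ Set.Ioc 0 t)
        ≤ MeasureTheory.volume (Set.Ioc ((2:ℝ)^(-(i:ℤ)-1)) t) := by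
          apply MeasureTheory.measure_mono
          rintro x ⟨⟨hx1, _⟩, ⟨_, hx2⟩⟩
          exact ⟨hx1, hx2⟩
      _ = ENNReal.ofReal (t - (2:ℝ)^(-(i:ℤ)-1)) := Real.volume_Ioc
  · rw [ell, if_neg hiM, if_neg hij, Eset, if_neg hiM]
    calc MeasureTheory.volume (Set.Ioc ((2:ℝ)^(-(i:ℤ)-1)) ((2:ℝ)^(-(i:ℤ))) ∩ Set.Ioc 0 t)
        ≤ MeasureTheory.volume (Set.Ioc ((2:ℝ)^(-(i:ℤ)-1)) ((2:ℝ)^(-(i:ℤ)))) :=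
          MeasureTheory.measure_mono Set.inter_subset_left
      _ = ENNReal.ofReal ((2:ℝ)^(-(i:ℤ)) - (2:ℝ)^(-(i:ℤ)-1)) := Real.volume_Ioc
      _ = ENNReal.ofReal ((2:ℝ)^(-(i:ℤ)-1)) := by rw [half_zpow]

lemma dyadic (t : ℝ) (h0 : 0 < t) (h1 : t ≤ 1) :
    ∃ j : ℕ, (2:ℝ)^(-(j:ℤ)-1) < t ∧ t ≤ (2:ℝ)^(-(j:ℤ)) := by
  obtain ⟨z, hz1, hz2⟩ := exists_mem_Ioc_zpow h0 one_lt_two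
  have hzneg : z < 0 := by
    by_contra h
    push_neg at h
    have h2 : (2:ℝ)^(0:ℤ) ≤ (2:ℝ)^z := zpow_le_zpow_right₀ one_le_two h
    rw [zpow_zero] at h2
    linarith
  refine ⟨(-(z+1)).toNat, ?_, ?_⟩
  · have e : -(((-(z+1)).toNat : ℤ)) - 1 = z := by
      rw [Int.toNat_of_nonneg (by omega)]; ring
    rw [e]; exact hz1
  · have e : -(((-(z+1)).toNat : ℤ)) = z + 1 := by
      rw [Int.toNat_of_nonneg (by omega)]; ring
    rw [e]; exact hz2

/-- With `n_0 = 1 < n_1 < ⋯`, `ψ(t) = √t·√(log₂(4/t))`, `α_k = 2^{k/2}/√(k+2)`,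
`w_m(t) = max_{n_m ≤ k < n_{m+1}} α_k·1_{(0,2^{-k}]}(t)` and
`w(t) = max_{0 ≤ m ≤ r} c_m·w_m(t)` for nonnegative `c_0,…,c_r`, one has
`sup_{0<t≤1} (ψ(t)/t)·∫_0^t w(s) ds ≤ 2·max_{0≤m≤r} c_m`. -/
theorem stmt15 (n : ℕ → ℕ) (hn0 : n 0 = 1) (hn : StrictMono n)
    (r : ℕ) (c : ℕ → ℝ) (hc : ∀ m : ℕ, m ≤ r → 0 ≤ c m) :
    (⨆ t : Set.Ioc (0 : ℝ) 1,
      ENNReal.ofReal ((Real.sqrt (t : ℝ) * Real.sqrt (Real.logb 2 (4 / (t : ℝ)))) / (t : ℝ)) *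
        ∫⁻ s in Set.Ioc (0 : ℝ) (t : ℝ), ENNReal.ofReal
          ((Finset.range (r + 1)).sup' Finset.nonempty_range_add_one fun m =>
            c m * (Finset.Ico (n m) (n (m + 1))).sup'
              (Finset.nonempty_Ico.mpr (hn (Nat.lt_succ_self m)))
              fun k => (2 : ℝ) ^ ((k : ℝ) / 2) / Real.sqrt (k + 2) *
                (Set.Ioc (0 : ℝ) ((2 : ℝ) ^ (-(k : ℤ)))).indicator (fun _ => (1 : ℝ)) s)) ≤
      ENNReal.ofReal (2 * (Finset.range (r + 1)).sup' Finset.nonempty_range_add_one c) := by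
  classical
  set C := (Finset.range (r+1)).sup' Finset.nonempty_range_add_one c with hCdef
  have hC0 : 0 ≤ C :=
    le_trans (hc 0 (Nat.zero_le r)) (Finset.le_sup' c (Finset.mem_range.mpr (Nat.succ_pos r)))
  apply iSup_le
  rintro ⟨t, ht0, ht1⟩
  set W : ℝ → ℝ := fun s => (Finset.range (r + 1)).sup' Finset.nonempty_range_add_one fun m =>
            c m * (Finset.Ico (n m) (n (m + 1))).sup'
              (Finset.nonempty_Ico.mpr (hn (Nat.lt_succ_self m)))
              fun k => (2 : ℝ) ^ ((k : ℝ) / 2) / Real.sqrt (k + 2) *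
                (Set.Ioc (0 : ℝ) ((2 : ℝ) ^ (-(k : ℤ)))).indicator (fun _ => (1 : ℝ)) s
    with hWdef
  show ENNReal.ofReal ((Real.sqrt t * Real.sqrt (Real.logb 2 (4 / t))) / t) *
      (∫⁻ s in Set.Ioc (0:ℝ) t, ENNReal.ofReal (W s)) ≤ ENNReal.ofReal (2 * C)
  obtain ⟨j, hj1, hj2⟩ := dyadic t ht0 ht1
  set M := max (n (r+1)) (j+1) with hMdef
  have hjM : j + 1 ≤ M := le_max_right _ _
  have hNM : n (r+1) ≤ M := le_max_left _ _
  have hjM' : j < M := lt_of_lt_of_le (Nat.lt_succ_self j) hjM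
  -- pointwise bound helper
  have hWle : ∀ s : ℝ, ∀ i : ℕ,
      (∀ k, k < n (r+1) → s ∈ Set.Ioc (0:ℝ) ((2:ℝ)^(-(k:ℤ))) → al k ≤ al i) →
      W s ≤ C * al i := by
    intro s i hk
    rw [hWdef]
    apply Finset.sup'_le
    intro m hm
    have hmr : m ≤ r := by
      have := Finset.mem_range.mp hm; omega
    have hcm : c m ≤ C := Finset.le_sup' c hm
    have hcm0 : 0 ≤ c m := hc m hmr
    have hinner : (Finset.Ico (n m) (n (m + 1))).sup'
        (Finset.nonempty_Ico.mpr (hn (Nat.lt_succ_self m)))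
        (fun k => (2 : ℝ) ^ ((k : ℝ) / 2) / Real.sqrt (k + 2) *
          (Set.Ioc (0 : ℝ) ((2 : ℝ) ^ (-(k : ℤ)))).indicator (fun _ => (1 : ℝ)) s) ≤ al i := by
      apply Finset.sup'_le
      intro k hk'
      have hkN : k < n (r+1) :=
        lt_of_lt_of_le (Finset.mem_Ico.mp hk').2 (hn.monotone (by omega : m+1 ≤ r+1))
      by_cases hmem : s ∈ Set.Ioc (0:ℝ) ((2:ℝ)^(-(k:ℤ)))
      · rw [Set.indicator_of_mem hmem, mul_one]
        exact hk k hkN hmem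
      · rw [Set.indicator_of_notMem hmem, mul_zero]
        exact (al_pos i).le
    calc c m * _ ≤ c m * al i := mul_le_mul_of_nonneg_left hinner hcm0
      _ ≤ C * al i := mul_le_mul_of_nonneg_right hcm (al_pos i).le
  have hptw : ∀ s ∈ Set.Ioc (0:ℝ) t, ENNReal.ofReal (W s) ≤
      ∑ i ∈ Finset.Icc j M, (Eset M i).indicator (fun _ => ENNReal.ofReal (C * al i)) s := by
    rintro s ⟨hs0, hst⟩
    suffices h : ∃ i ∈ Finset.Icc j M, s ∈ Eset M i ∧ W s ≤ C * al i by
      obtain ⟨i, hiI, hsE, hWb⟩ := h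
      calc ENNReal.ofReal (W s) ≤ ENNReal.ofReal (C * al i) := ENNReal.ofReal_le_ofReal hWb
        _ = (Eset M i).indicator (fun _ => ENNReal.ofReal (C * al i)) s :=
            (Set.indicator_of_mem hsE (fun _ => ENNReal.ofReal (C * al i))).symm
        _ ≤ _ := Finset.single_le_sum
            (f := fun i => (Eset M i).indicator (fun _ => ENNReal.ofReal (C * al i)) s)
            (fun i _ => zero_le) hiI
    obtain ⟨i', hi1, hi2⟩ := dyadic s hs0 (hst.trans ht1)
    by_cases hcase : i' < M
    · refine ⟨i', ?_, ?_, ?_⟩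
      · rw [Finset.mem_Icc]
        refine ⟨?_, hcase.le⟩
        by_contra h
        push_neg at h
        have hij : (i':ℤ) + 1 ≤ (j:ℤ) := by exact_mod_cast h
        have : (2:ℝ)^(-(j:ℤ)) ≤ (2:ℝ)^(-(i':ℤ)-1) :=
          zpow_le_zpow_right₀ one_le_two (by omega)
        linarith [hj2, hst]
      · rw [Eset, if_neg (Nat.ne_of_lt hcase)]
        exact ⟨hi1, hi2⟩
      · apply hWle
        intro k _ hmem
        apply al_mono_s15
        have hlt : (2:ℝ)^(-(i':ℤ)-1) < (2:ℝ)^(-(k:ℤ)) := lt_of_lt_of_le hi1 hmem.2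
        have := (zpow_lt_zpow_iff_right₀ (one_lt_two (α := ℝ))).mp hlt
        omega
    · push_neg at hcase
      refine ⟨M, ?_, ?_, ?_⟩
      · rw [Finset.mem_Icc]; omega
      · rw [Eset, if_pos rfl]
        refine ⟨hs0, le_trans hi2 ?_⟩
        exact zpow_le_zpow_right₀ one_le_two (by omega : -(i':ℤ) ≤ -(M:ℤ))
      · apply hWle
        intro k hkN _
        exact al_mono_s15 (by omega : k ≤ M)
  -- integral bound
  have hellnn : ∀ i ∈ Finset.Icc j M, 0 ≤ C * al i * ell j M t i := by
    intro i _
    refine mul_nonneg (mul_nonneg hC0 (al_pos i).le) ?_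
    rw [ell]
    split
    · exact (zpow_pos (by norm_num : (0:ℝ) < 2) _).le
    split
    · linarith [hj1]
    · exact (zpow_pos (by norm_num : (0:ℝ) < 2) _).le
  have hint : (∫⁻ s in Set.Ioc (0:ℝ) t, ENNReal.ofReal (W s)) ≤
      ENNReal.ofReal (∑ i ∈ Finset.Icc j M, C * al i * ell j M t i) := by
    calc (∫⁻ s in Set.Ioc (0:ℝ) t, ENNReal.ofReal (W s))
        ≤ ∫⁻ s in Set.Ioc (0:ℝ) t,
            (∑ i ∈ Finset.Icc j M, (Eset M i).indicator (fun _ => ENNReal.ofReal (C * al i)) s) :=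
          MeasureTheory.setLIntegral_mono
            (Finset.measurable_sum _ (fun i _ =>
              Measurable.indicator measurable_const (Eset_meas M i))) hptw
      _ = ∑ i ∈ Finset.Icc j M, ∫⁻ s in Set.Ioc (0:ℝ) t,
            (Eset M i).indicator (fun _ => ENNReal.ofReal (C * al i)) s :=
          MeasureTheory.lintegral_finset_sum _ (fun i _ =>
            Measurable.indicator measurable_const (Eset_meas M i))
      _ = ∑ i ∈ Finset.Icc j M, ENNReal.ofReal (C * al i) *
            MeasureTheory.volume (Eset M i ∩ Set.Ioc 0 t) := by
          refine Finset.sum_congr rfl (fun i _ => ?_)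
          rw [MeasureTheory.lintegral_indicator_const (Eset_meas M i),
            MeasureTheory.Measure.restrict_apply (Eset_meas M i)]
      _ ≤ ∑ i ∈ Finset.Icc j M, ENNReal.ofReal (C * al i) * ENNReal.ofReal (ell j M t i) :=
          Finset.sum_le_sum (fun i _ => mul_le_mul_right (vol_bound j M t hjM' hj1 i) _)
      _ = ∑ i ∈ Finset.Icc j M, ENNReal.ofReal (C * al i * ell j M t i) := by
          refine Finset.sum_congr rfl (fun i _ => ?_)
          rw [← ENNReal.ofReal_mul (mul_nonneg hC0 (al_pos i).le)]
      _ = ENNReal.ofReal (∑ i ∈ Finset.Icc j M, C * al i * ell j M t i) :=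
          (ENNReal.ofReal_sum_of_nonneg hellnn).symm
  -- final
  have hψ0 : 0 ≤ Real.sqrt t * Real.sqrt (Real.logb 2 (4 / t)) / t :=
    div_nonneg (mul_nonneg (Real.sqrt_nonneg _) (Real.sqrt_nonneg _)) ht0.le
  have hsplit : ∑ i ∈ Finset.Icc j M, C * al i * ell j M t i =
      C * (al j * (t - (2:ℝ)^(-(j:ℤ)-1))
        + ((∑ i ∈ Finset.Ico (j+1) M, al i * (2:ℝ)^(-(i:ℤ)-1)) + al M * (2:ℝ)^(-(M:ℤ)))) := by
    have e1 : Finset.Icc j M = insert j (insert M (Finset.Ico (j+1) M)) := by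
      ext x
      simp only [Finset.mem_Icc, Finset.mem_insert, Finset.mem_Ico]
      omega
    rw [e1, Finset.sum_insert (by simp only [Finset.mem_insert, Finset.mem_Ico]; omega),
      Finset.sum_insert (by simp only [Finset.mem_Ico]; omega)]
    have eM : ell j M t M = (2:ℝ)^(-(M:ℤ)) := if_pos rfl
    have ej : ell j M t j = t - (2:ℝ)^(-(j:ℤ)-1) := by
      rw [ell, if_neg (by omega), if_pos rfl]
    have emid : ∀ i ∈ Finset.Ico (j+1) M,
        C * al i * ell j M t i = C * (al i * (2:ℝ)^(-(i:ℤ)-1)) := by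
      intro i hi
      have hi' := Finset.mem_Ico.mp hi
      rw [ell, if_neg (by omega), if_neg (by omega)]
      ring
    rw [ej, eM, Finset.sum_congr rfl emid, ← Finset.mul_sum]
    ring
  have hfinal : Real.sqrt t * Real.sqrt (Real.logb 2 (4 / t)) / t *
      (∑ i ∈ Finset.Icc j M, C * al i * ell j M t i) ≤ 2 * C := by
    rw [hsplit]
    have hX := key j M t hjM hj1 hj2
    calc Real.sqrt t * Real.sqrt (Real.logb 2 (4 / t)) / t *
          (C * (al j * (t - (2:ℝ)^(-(j:ℤ)-1))
            + ((∑ i ∈ Finset.Ico (j+1) M, al i * (2:ℝ)^(-(i:ℤ)-1)) + al M * (2:ℝ)^(-(M:ℤ)))))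
        = C * (Real.sqrt t * Real.sqrt (Real.logb 2 (4 / t)) / t *
            (al j * (t - (2:ℝ)^(-(j:ℤ)-1))
            + ((∑ i ∈ Finset.Ico (j+1) M, al i * (2:ℝ)^(-(i:ℤ)-1)) + al M * (2:ℝ)^(-(M:ℤ))))) := by
          ring
      _ ≤ C * 2 := mul_le_mul_of_nonneg_left hX hC0
      _ = 2 * C := by ring
  calc ENNReal.ofReal (Real.sqrt t * Real.sqrt (Real.logb 2 (4 / t)) / t) *
        (∫⁻ s in Set.Ioc (0:ℝ) t, ENNReal.ofReal (W s))
      ≤ ENNReal.ofReal (Real.sqrt t * Real.sqrt (Real.logb 2 (4 / t)) / t) *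
        ENNReal.ofReal (∑ i ∈ Finset.Icc j M, C * al i * ell j M t i) :=
        mul_le_mul_right hint _
    _ = ENNReal.ofReal (Real.sqrt t * Real.sqrt (Real.logb 2 (4 / t)) / t *
          (∑ i ∈ Finset.Icc j M, C * al i * ell j M t i)) :=
        (ENNReal.ofReal_mul hψ0).symm
    _ ≤ ENNReal.ofReal (2 * C) := ENNReal.ofReal_le_ofReal hfinal
end
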